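/- Let G be a graph and A a tree-decomposition of G whose every induced separator is a clique of G. For each node i with bag A_i, let G_i be obtained from G[A_i] by adding edges of K(N(C)) for every component C of G \ A_i. Then tw(G) = max_i tw(G_i). -/

import Mathlib

open SimpleGraph

/-- A tree-decomposition of `G`: a tree `T` with bags satisfying the
vertex-cover, edge-cover and connectivity (running intersection) conditions. -/
def IsTreeDecomp {V ι : Type} (G : SimpleGraph V) (T : SimpleGraph ι) (bag : ι → Set V) : Prop :=
  T.Connected ∧ T.IsAcyclic ∧
  (∀ v : V, ∃ i, v ∈ bag i) ∧
  (∀ u v : V, G.Adj u v → ∃ i, u ∈ bag i ∧ v ∈ bag i) ∧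
  (∀ v : V, (T.induce {i | v ∈ bag i}).Connected)

/-- Treewidth: the least `k` such that `G` has a tree-decomposition all of whose
bags have at most `k + 1` vertices. -/
noncomputable def tw {V : Type} (G : SimpleGraph V) : ℕ :=
  sInf {k | ∃ (ι : Type) (T : SimpleGraph ι) (bag : ι → Set V),
    IsTreeDecomp G T bag ∧ ∀ i, (bag i).ncard ≤ k + 1}

/-- `S` separates `u` from `v` in `G`: both are outside `S` and every walk meets `S`. -/
def Separates {V : Type} (G : SimpleGraph V) (S : Set V) (u v : V) : Prop :=
  u ∉ S ∧ v ∉ S ∧ ∀ p : G.Walk u v, ∃ x ∈ p.support, x ∈ S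

/-- A minimal separator: a minimal `a`–`b` separator for some `a`, `b`. -/
def IsMinSeparator {V : Type} (G : SimpleGraph V) (S : Set V) : Prop :=
  ∃ a b, Separates G S a b ∧ ∀ S' ⊂ S, ¬ Separates G S' a b

/-- Contraction of `G` by (the edge set of) `F`: vertices are the connected
components of `F`; two distinct components are adjacent iff some vertex of one is
`G`-adjacent to some vertex of the other. -/
def contractBy {V : Type} (G F : SimpleGraph V) : SimpleGraph F.ConnectedComponent where
  Adj C D := C ≠ D ∧ ∃ u v : V,
    F.connectedComponentMk u = C ∧ F.connectedComponentMk v = D ∧ G.Adj u v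
  symm := by constructor; rintro C D ⟨h, u, v, hu, hv, huv⟩; exact ⟨h.symm, v, u, hv, hu, huv.symm⟩
  loopless := by constructor; rintro C ⟨h, -⟩; exact h rfl

/-- `G` with the extra edge `{u, v}` added. -/
def addEdge {V : Type} (G : SimpleGraph V) (u v : V) : SimpleGraph V :=
  G ⊔ fromEdgeSet {s(u, v)}

/-- `H` is a minor of `G`: disjoint nonempty connected branch sets in `G`,
one for each vertex of `H`, with edges of `H` realized between branch sets. -/
def IsMinorOf {W V : Type} (H : SimpleGraph W) (G : SimpleGraph V) : Prop :=
  ∃ B : W → Set V,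
    (∀ w, (B w).Nonempty) ∧
    (∀ w, (G.induce (B w)).Connected) ∧
    (∀ w₁ w₂, w₁ ≠ w₂ → Disjoint (B w₁) (B w₂)) ∧
    (∀ w₁ w₂, H.Adj w₁ w₂ → ∃ u ∈ B w₁, ∃ v ∈ B w₂, G.Adj u v)

/-- Chordality: every cycle of length at least 4 has a chord. -/
def IsChordal {V : Type} (H : SimpleGraph V) : Prop :=
  ∀ ⦃v : V⦄ (c : H.Walk v v), c.IsCycle → 4 ≤ c.length →
    ∃ x y, x ∈ c.support ∧ y ∈ c.support ∧ H.Adj x y ∧ s(x, y) ∉ c.edges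

/-- `H` is a minimal triangulation of `G`. -/
def IsMinimalTriangulation {V : Type} (G H : SimpleGraph V) : Prop :=
  IsChordal H ∧ G ≤ H ∧ ∀ H' : SimpleGraph V, IsChordal H' → G ≤ H' → H' ≤ H → H' = H

/-- `X` is a maximal clique of `H`. -/
def IsMaximalClique {V : Type} (H : SimpleGraph V) (X : Set V) : Prop :=
  H.IsClique X ∧ ∀ Y, H.IsClique Y → X ⊆ Y → X = Y

/-- `X` is a potential maximal clique of `G`. -/
def IsPMC {V : Type} (G : SimpleGraph V) (X : Set V) : Prop :=
  ∃ H, IsMinimalTriangulation G H ∧ IsMaximalClique H X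

/-- The vertex set of the component `C` of `G \ S`. -/
def compSet {V : Type} (G : SimpleGraph V) (S : Set V)
    (C : (G.induce Sᶜ).ConnectedComponent) : Set V :=
  {v : V | ∃ h : v ∈ Sᶜ, (G.induce Sᶜ).connectedComponentMk ⟨v, h⟩ = C}

/-- The open neighborhood of a vertex set `W` in `G`. -/
def nbhdSet {V : Type} (G : SimpleGraph V) (W : Set V) : Set V :=
  {v | v ∉ W ∧ ∃ u ∈ W, G.Adj u v}

/-- The induced subgraph on `U` with `S` completed into a clique. -/
def completedOn {V : Type} (G : SimpleGraph V) (U S : Set V) : SimpleGraph U where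
  Adj a b := a ≠ b ∧ (G.Adj (a : V) (b : V) ∨ ((a : V) ∈ S ∧ (b : V) ∈ S))
  symm := by
    constructor
    rintro a b ⟨h1, h2⟩
    refine ⟨h1.symm, ?_⟩
    rcases h2 with h | h
    · exact Or.inl h.symm
    · exact Or.inr ⟨h.2, h.1⟩
  loopless := by constructor; rintro a ⟨h, -⟩; exact h rfl

/-- The graph on `U` obtained from `G[U]` by adding the edges of the complete graph
`K(N(C))` for every component `C` of `G \ U`. -/
def realized {V : Type} (G : SimpleGraph V) (U : Set V) : SimpleGraph U where
  Adj a b := a ≠ b ∧ (G.Adj (a : V) (b : V) ∨ ∃ C : (G.induce Uᶜ).ConnectedComponent,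
    (a : V) ∈ nbhdSet G (compSet G U C) ∧ (b : V) ∈ nbhdSet G (compSet G U C))
  symm := by
    constructor
    rintro a b ⟨h1, h2⟩
    refine ⟨h1.symm, ?_⟩
    rcases h2 with h | ⟨C, hx, hy⟩
    · exact Or.inl h.symm
    · exact Or.inr ⟨C, hy, hx⟩
  loopless := by constructor; rintro a ⟨h, -⟩; exact h rfl
section TW
variable {V : Type} [Finite V]

lemma connected_of_subsingleton {W : Type*} [Subsingleton W] [Nonempty W]
    (H : SimpleGraph W) : H.Connected := by
  constructor
  intro a b
  rw [Subsingleton.elim a b]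

/-- The defining set of `tw` is nonempty. -/
lemma tw_set_nonempty (G : SimpleGraph V) :
    {k | ∃ (ι : Type) (T : SimpleGraph ι) (bag : ι → Set V),
      IsTreeDecomp G T bag ∧ ∀ i, (bag i).ncard ≤ k + 1}.Nonempty := by
  refine ⟨Nat.card V, Unit, ⊥, fun _ => Set.univ, ⟨connected_of_subsingleton _, ?_, ?_, ?_, ?_⟩, ?_⟩
  · intro v c hc
    cases c with
    | nil => exact hc.ne_nil rfl
    | cons h p => exact h
  · exact fun v => ⟨(), trivial⟩
  · exact fun u v _ => ⟨(), trivial, trivial⟩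
  · intro v
    haveI : Nonempty {i : Unit | v ∈ (Set.univ : Set V)} := ⟨⟨(), trivial⟩⟩
    exact connected_of_subsingleton _
  · intro i
    simp [Set.ncard_univ]

lemma tw_le (G : SimpleGraph V) {k : ℕ} {ι' : Type} {T : SimpleGraph ι'} {bag : ι' → Set V}
    (h : IsTreeDecomp G T bag) (hw : ∀ i, (bag i).ncard ≤ k + 1) : tw G ≤ k :=
  Nat.sInf_le ⟨ι', T, bag, h, hw⟩

lemma exists_optimal_decomp (G : SimpleGraph V) :
    ∃ (ι' : Type) (T : SimpleGraph ι') (bag : ι' → Set V),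
      IsTreeDecomp G T bag ∧ ∀ i, (bag i).ncard ≤ tw G + 1 :=
  Nat.sInf_mem (tw_set_nonempty G)

/-- treewidth is monotone under induced subgraphs. -/
lemma tw_induce_le (G : SimpleGraph V) (U : Set V) : tw (G.induce U) ≤ tw G := by
  obtain ⟨ι', T, bg, ⟨hc, ha, hv, he, hconn⟩, hw⟩ := exists_optimal_decomp G
  refine tw_le _ (T := T) (bag := fun i => Subtype.val ⁻¹' bg i) ?_ ?_
  · refine ⟨hc, ha, ?_, ?_, ?_⟩
    · exact fun v => (hv v.1).imp (fun i h => h)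
    · intro u v huv
      exact (he u.1 v.1 huv).imp (fun i h => h)
    · intro v
      exact hconn v.1
  · intro i
    calc (Subtype.val ⁻¹' bg i : Set U).ncard
        = (Subtype.val '' (Subtype.val ⁻¹' bg i : Set U)).ncard :=
          (Set.ncard_image_of_injective _ Subtype.val_injective).symm
      _ ≤ (bg i).ncard := Set.ncard_le_ncard (Set.image_preimage_subset _ _) (Set.toFinite _)
      _ ≤ tw G + 1 := hw i

end TW
section Tree
variable {ι : Type} {T : SimpleGraph ι} [DecidableEq ι]

open SimpleGraph.Walk in
lemma my_takeUntil_start {v w : ι} (p : T.Walk v w) (h : v ∈ p.support) :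
    p.takeUntil v h = SimpleGraph.Walk.nil := by
  cases p with
  | nil => rfl
  | cons r q => simp [SimpleGraph.Walk.takeUntil]

lemma my_takeUntil_cons_ne {v x w u : ι} (r : T.Adj v x) (q : T.Walk x w)
    (h : u ∈ (SimpleGraph.Walk.cons r q).support) (hne : v ≠ u) (h' : u ∈ q.support) :
    (SimpleGraph.Walk.cons r q).takeUntil u h = SimpleGraph.Walk.cons r (q.takeUntil u h') := by
  simp [SimpleGraph.Walk.takeUntil, hne]

lemma mem_support_cons' {v x w u : ι} (r : T.Adj v x) (q : T.Walk x w)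
    (h : u ∈ (SimpleGraph.Walk.cons r q).support) (hne : v ≠ u) : u ∈ q.support := by
  rw [SimpleGraph.Walk.support_cons] at h
  cases List.mem_cons.mp h with
  | inl h => exact absurd h.symm hne
  | inr h => exact h

lemma takeUntil_antisymm {t s y m : ι} (Q : T.Walk t s)
    (hm : m ∈ Q.support) (hy : y ∈ Q.support)
    (h1 : y ∈ (Q.takeUntil m hm).support) (h2 : m ∈ (Q.takeUntil y hy).support) : y = m := by
  induction Q with
  | nil =>
    rw [SimpleGraph.Walk.mem_support_nil_iff] at hm hy
    rw [hy, hm]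
  | cons r q ih =>
    rename_i v x w
    by_cases hvm : v = m
    · subst hvm
      rw [my_takeUntil_start] at h1
      simpa using h1
    · by_cases hvy : v = y
      · subst hvy
        rw [my_takeUntil_start] at h2
        simp at h2
        exact absurd h2.symm hvm
      · have hm' : m ∈ q.support := mem_support_cons' r q hm hvm
        have hy' : y ∈ q.support := mem_support_cons' r q hy hvy
        rw [my_takeUntil_cons_ne r q hm hvm hm'] at h1
        rw [my_takeUntil_cons_ne r q hy hvy hy'] at h2
        simp only [SimpleGraph.Walk.support_cons, List.mem_cons] at h1 h2
        rcases h1 with h1 | h1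
        · exact absurd h1.symm hvy
        rcases h2 with h2 | h2
        · exact absurd h2.symm hvm
        exact ih hm' hy' h1 h2

lemma first_hit {t s : ι} (Q : T.Walk t s) (P : ι → Prop)
    (hex : ∃ y ∈ Q.support, P y) :
    ∃ (x : ι) (hx : x ∈ Q.support), P x ∧
      ∀ y (hy : y ∈ Q.support), P y → x ∈ (Q.takeUntil y hy).support := by
  induction Q with
  | nil =>
    obtain ⟨y, hy, hPy⟩ := hex
    refine ⟨y, hy, hPy, ?_⟩
    intro z hz _
    have hy' := SimpleGraph.Walk.mem_support_nil_iff.mp hy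
    have hz' := SimpleGraph.Walk.mem_support_nil_iff.mp hz
    subst hy'; subst hz'
    simp [my_takeUntil_start]
  | cons r q ih =>
    rename_i v x w
    by_cases hPv : P v
    · exact ⟨v, SimpleGraph.Walk.start_mem_support _, hPv,
        fun y hy _ => SimpleGraph.Walk.start_mem_support _⟩
    · have hex' : ∃ y ∈ q.support, P y := by
        obtain ⟨y, hy, hPy⟩ := hex
        have hvy : v ≠ y := by rintro rfl; exact hPv hPy
        exact ⟨y, mem_support_cons' r q hy hvy, hPy⟩
      obtain ⟨z, hz, hPz, hfirst⟩ := ih hex'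
      refine ⟨z, by rw [SimpleGraph.Walk.support_cons]; exact List.mem_cons_of_mem _ hz, hPz, ?_⟩
      intro y hy hPy
      have hvy : v ≠ y := by rintro rfl; exact hPv hPy
      have hy' : y ∈ q.support := mem_support_cons' r q hy hvy
      rw [my_takeUntil_cons_ne r q hy hvy hy']
      exact by rw [SimpleGraph.Walk.support_cons]; exact List.mem_cons_of_mem _ (hfirst y hy' hPy)

omit [DecidableEq ι] in
/-- In an acyclic graph, paths between the same endpoints are equal. -/
lemma path_eq (ha : T.IsAcyclic) {a b : ι} {p q : T.Walk a b}
    (hp : p.IsPath) (hq : q.IsPath) : p = q := by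
  have := (SimpleGraph.isAcyclic_iff_path_unique.mp ha) ⟨p, hp⟩ ⟨q, hq⟩
  exact congrArg Subtype.val this

/-- Any path between two vertices of an induced-connected set stays in the set. -/
lemma subtree_path (ha : T.IsAcyclic) {S : Set ι} (hS : (T.induce S).Connected)
    {a b : ι} (hA : a ∈ S) (hB : b ∈ S) (p : T.Walk a b) (hp : p.IsPath) :
    ∀ x ∈ p.support, x ∈ S := by
  obtain ⟨q⟩ := hS ⟨a, hA⟩ ⟨b, hB⟩
  let emb : T.induce S ↪g T := SimpleGraph.Embedding.induce S
  have hq : (q.map emb.toHom).toPath.1.support ⊆ (q.map emb.toHom).support :=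
    SimpleGraph.Walk.support_toPath_subset _
  have heq : p = (q.map emb.toHom).toPath.1 := path_eq ha hp (q.map emb.toHom).toPath.2
  intro x hx
  rw [heq] at hx
  have := hq hx
  rw [SimpleGraph.Walk.support_map] at this
  obtain ⟨y, _, rfl⟩ := List.mem_map.mp this
  exact y.2
end Tree
section CliqueBag
variable {W : Type} {ι' : Type} [DecidableEq ι']

/-- Every clique of `H` is contained in some bag of any tree-decomposition of `H`. -/
lemma clique_in_bag [Finite W] (H : SimpleGraph W) {T' : SimpleGraph ι'} {bg : ι' → Set W}
    (htd : IsTreeDecomp H T' bg) {K : Set W} (hK : H.IsClique K) : ∃ t, K ⊆ bg t := by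
  obtain ⟨hconn, hacyc, hvert, hedge, hsub⟩ := htd
  haveI : Nonempty ι' := hconn.nonempty
  revert hK
  induction K, (Set.toFinite K) using Set.Finite.induction_on with
  | empty => exact fun _ => ⟨Classical.arbitrary ι', by simp⟩
  | @insert w K₀ hwK₀ hfin IH =>
    intro hK
    obtain ⟨t, ht⟩ := IH (hK.subset (Set.subset_insert _ _))
    by_cases hwt : w ∈ bg t
    · exact ⟨t, Set.insert_subset hwt ht⟩
    obtain ⟨s, hs⟩ := hvert w
    obtain ⟨Q0⟩ := hconn t s
    set Q : T'.Walk t s := Q0.toPath.1 with hQdef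
    have hQ : Q.IsPath := Q0.toPath.2
    obtain ⟨x, hxQ, hwx, hfirst⟩ := first_hit Q (fun z => w ∈ bg z)
      ⟨s, SimpleGraph.Walk.end_mem_support _, hs⟩
    refine ⟨x, ?_⟩
    intro w' hw'
    rcases Set.mem_insert_iff.mp hw' with rfl | hw'
    · exact hwx
    have hne : w ≠ w' := fun h => hwK₀ (h ▸ hw')
    have hadj : H.Adj w w' := hK (Set.mem_insert _ _) (Set.mem_insert_of_mem _ hw') hne
    obtain ⟨s', hws', hw's'⟩ := hedge w w' hadj
    obtain ⟨P0⟩ := hconn s s'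
    set P : T'.Walk s s' := P0.toPath.1 with hPdef
    have hP : P.IsPath := P0.toPath.2
    obtain ⟨R0⟩ := hconn t s'
    set R : T'.Walk t s' := R0.toPath.1 with hRdef
    have hR : R.IsPath := R0.toPath.2
    have hPTw : ∀ z ∈ P.support, w ∈ bg z :=
      subtree_path hacyc (hsub w) hs hws' P hP
    have hRTw' : ∀ z ∈ R.support, w' ∈ bg z :=
      subtree_path hacyc (hsub w') (ht hw') hw's' R hR
    -- median construction
    obtain ⟨m, hmQ, hmP, hfirstm⟩ := first_hit Q (fun z => z ∈ P.support)
      ⟨s, SimpleGraph.Walk.end_mem_support _, SimpleGraph.Walk.start_mem_support _⟩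
    have htake : (Q.takeUntil m hmQ).IsPath := hQ.takeUntil hmQ
    have hdrop : (P.dropUntil m hmP).IsPath := hP.dropUntil hmP
    have hdnodup := (SimpleGraph.Walk.isPath_def _).mp hdrop
    rw [SimpleGraph.Walk.support_eq_cons] at hdnodup
    obtain ⟨hmnot, htailnodup⟩ := List.nodup_cons.mp hdnodup
    have hWm : ((Q.takeUntil m hmQ).append (P.dropUntil m hmP)).IsPath := by
      rw [SimpleGraph.Walk.isPath_def, SimpleGraph.Walk.support_append]
      refine List.Nodup.append ((SimpleGraph.Walk.isPath_def _).mp htake) htailnodup ?_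
      intro z hz1 hz2
      have hzQ : z ∈ Q.support := SimpleGraph.Walk.support_takeUntil_subset _ _ hz1
      have hzdrop : z ∈ (P.dropUntil m hmP).support := List.mem_of_mem_tail hz2
      have hzne : z ≠ m := by
        rintro rfl
        rw [SimpleGraph.Walk.support_eq_cons (P.dropUntil z hmP)] at hz2
        exact hmnot (by simpa using hz2)
      have hzP : z ∈ P.support := SimpleGraph.Walk.support_dropUntil_subset _ _ hzdrop
      exact hzne (takeUntil_antisymm Q hmQ hzQ hz1 (hfirstm z hzQ hzP))
    have hReq : R = (Q.takeUntil m hmQ).append (P.dropUntil m hmP) := path_eq hacyc hR hWm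
    have hwm : w ∈ bg m := hPTw m hmP
    have hxtake : x ∈ (Q.takeUntil m hmQ).support := hfirst m hmQ hwm
    have hxR : x ∈ R.support := by
      rw [hReq, SimpleGraph.Walk.mem_support_append_iff]
      exact Or.inl hxtake
    exact hRTw' x hxR
end CliqueBag
section LemmaA
variable {V ι : Type} [DecidableEq ι] {T : SimpleGraph ι}

/-- Connect two vertices of an induced-connected set avoiding a vertex outside it. -/
lemma connect_avoiding (hconn : T.Connected) (ha : T.IsAcyclic) {S : Set ι} 
    (hS : (T.induce S).Connected) {i m m' : ι} (hi : i ∉ S) (hm : m ∈ S) (hm' : m' ∈ S) :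
    ∃ q : T.Walk m m', i ∉ q.support := by
  obtain ⟨w⟩ := hconn m m'
  refine ⟨w.toPath.1, fun hmem => ?_⟩
  exact hi (subtree_path ha hS hm hm' w.toPath.1 w.toPath.2 i hmem)

/-- In an acyclic graph, two neighbors of `i` joined by a walk avoiding `i` are equal. -/
lemma branch_unique (ha : T.IsAcyclic) {i j j' m m' : ι}
    (hj : T.Adj i j) (hj' : T.Adj i j')
    (w : T.Walk j m) (hw : i ∉ w.support)
    (w' : T.Walk j' m') (hw' : i ∉ w'.support)
    (wmid : T.Walk m m') (hmid : i ∉ wmid.support) : j = j' := by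
  classical
  set W : T.Walk j j' := w.append (wmid.append w'.reverse) with hW
  have hWi : i ∉ W.support := by
    rw [hW, SimpleGraph.Walk.mem_support_append_iff, SimpleGraph.Walk.mem_support_append_iff,
      SimpleGraph.Walk.support_reverse]
    push_neg
    exact ⟨hw, hmid, by simpa using hw'⟩
  set P : T.Walk j j' := W.toPath.1 with hP
  have hPpath : P.IsPath := W.toPath.2
  have hPi : i ∉ P.support := fun h => hWi (SimpleGraph.Walk.support_toPath_subset _ h)
  have hc1 : (SimpleGraph.Walk.cons hj P).IsPath := by
    rw [SimpleGraph.Walk.isPath_def, SimpleGraph.Walk.support_cons]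
    exact List.nodup_cons.mpr ⟨hPi, SimpleGraph.Walk.isPath_def _ |>.mp hPpath⟩
  have hc2 : (SimpleGraph.Walk.cons hj' SimpleGraph.Walk.nil).IsPath := by
    simp [SimpleGraph.Walk.isPath_def, hj'.ne]
  have heq := path_eq ha hc1 hc2
  have := congrArg SimpleGraph.Walk.support heq
  rw [SimpleGraph.Walk.support_cons, SimpleGraph.Walk.support_cons,
    SimpleGraph.Walk.support_nil, SimpleGraph.Walk.support_eq_cons P] at this
  have h2 : j :: P.support.tail = [j'] := by simpa using this
  exact (List.cons_eq_cons.mp h2).1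

end LemmaA

section LemmaA2
variable {V ι : Type} [DecidableEq ι] {G : SimpleGraph V} {T : SimpleGraph ι} {bag : ι → Set V}

/-- Walk in a component of `G \ bag i` gives a `T`-walk between hosting bags avoiding `i`. -/
lemma walk_avoiding (htd : IsTreeDecomp G T bag) (i : ι) :
    ∀ {a b : ↥(bag i)ᶜ} (_ : (G.induce (bag i)ᶜ).Walk a b) (m m' : ι)
      (_ : (a : V) ∈ bag m) (_ : (b : V) ∈ bag m'),
      ∃ q : T.Walk m m', i ∉ q.support := by
  obtain ⟨hconn, hacyc, hvert, hedge, hsub⟩ := htd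
  intro a b w
  induction w with
  | nil =>
    rename_i aa
    intro m m' hm hm'
    exact connect_avoiding hconn hacyc (hsub ↑aa) aa.2 hm hm'
  | @cons a a' b hadj w ih =>
    intro m m' hm hm'
    have hG : G.Adj ↑a ↑a' := hadj
    obtain ⟨m'', hm''1, hm''2⟩ := hedge _ _ hG
    obtain ⟨q1, hq1⟩ := connect_avoiding hconn hacyc (hsub (a : V)) a.2 hm hm''1
    obtain ⟨q2, hq2⟩ := ih m'' m' hm''2 hm'
    refine ⟨q1.append q2, ?_⟩
    rw [SimpleGraph.Walk.mem_support_append_iff]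
    push_neg
    exact ⟨hq1, hq2⟩

lemma nbhd_subset_bag (i : ι) {C : (G.induce (bag i)ᶜ).ConnectedComponent}
    {u : V} (hu : u ∈ nbhdSet G (compSet G (bag i) C)) : u ∈ bag i := by
  obtain ⟨hnot, c, hc, hadj⟩ := hu
  by_contra hbag
  obtain ⟨hc', hcC⟩ := hc
  have : (G.induce (bag i)ᶜ).Adj ⟨c, hc'⟩ ⟨u, hbag⟩ := hadj
  exact hnot ⟨hbag, by
    rw [← hcC]
    exact (SimpleGraph.ConnectedComponent.connectedComponentMk_eq_of_adj this.symm)⟩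

/-- Two members of `N(C)` lie in a common separator bag. -/
lemma nbhd_pair_in_separator (htd : IsTreeDecomp G T bag)
    (i : ι) {C : (G.induce (bag i)ᶜ).ConnectedComponent} {u v : V}
    (hu : u ∈ nbhdSet G (compSet G (bag i) C)) (hv : v ∈ nbhdSet G (compSet G (bag i) C)) :
    ∃ j, T.Adj i j ∧ u ∈ bag j ∧ v ∈ bag j := by
  have hui : u ∈ bag i := nbhd_subset_bag i hu
  have hvi : v ∈ bag i := nbhd_subset_bag i hv
  obtain ⟨hconn, hacyc, hvert, hedge, hsub⟩ := htd
  obtain ⟨hun, cu, hcu, hadju⟩ := hu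
  obtain ⟨hvn, cv, hcv, hadjv⟩ := hv
  obtain ⟨hcu', hcuC⟩ := hcu
  obtain ⟨hcv', hcvC⟩ := hcv
  -- bags containing the edges
  obtain ⟨mu, hcumu, humu⟩ := hedge _ _ hadju
  obtain ⟨mv, hcvmv, hvmv⟩ := hedge _ _ hadjv
  have hmui : mu ≠ i := fun h => hcu' (h ▸ hcumu)
  have hmvi : mv ≠ i := fun h => hcv' (h ▸ hcvmv)
  -- paths from i to mu, mv
  obtain ⟨Pu0⟩ := hconn i mu
  obtain ⟨Pv0⟩ := hconn i mv
  have hpupath : (Pu0.toPath.1 : T.Walk i mu).IsPath := Pu0.toPath.2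
  have hpvpath : (Pv0.toPath.1 : T.Walk i mv).IsPath := Pv0.toPath.2
  set pu : T.Walk i mu := Pu0.toPath.1 with hpudef
  set pv : T.Walk i mv := Pv0.toPath.1 with hpvdef
  clear_value pu pv
  clear hpudef hpvdef
  -- decompose the path from i
  have decompose : ∀ (m : ι) (p : T.Walk i m), m ≠ i → p.IsPath →
      ∃ (j : ι) (_ : T.Adj i j) (q : T.Walk j m), i ∉ q.support ∧ j ∈ p.support := by
    intro m p hmi hpath
    cases p with
    | nil => exact absurd rfl hmi
    | cons h q =>
      have : i ∉ q.support := by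
        have := SimpleGraph.Walk.isPath_def _ |>.mp hpath
        rw [SimpleGraph.Walk.support_cons] at this
        exact (List.nodup_cons.mp this).1
      exact ⟨_, h, q, this, by
        rw [SimpleGraph.Walk.support_cons]
        exact List.mem_cons_of_mem _ (SimpleGraph.Walk.start_mem_support _)⟩
  obtain ⟨ju, hju, qu, hqu, hjumem⟩ := decompose mu pu hmui hpupath
  obtain ⟨jv, hjv, qv, hqv, hjvmem⟩ := decompose mv pv hmvi hpvpath
  -- u ∈ bag ju
  have hubagju : u ∈ bag ju :=
    subtree_path hacyc (hsub u) (by exact hui) humu pu hpupath ju hjumem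
  have hvbagjv : v ∈ bag jv :=
    subtree_path hacyc (hsub v) (by exact hvi) hvmv pv hpvpath jv hjvmem
  -- middle walk
  have hreach : (G.induce (bag i)ᶜ).Reachable ⟨cu, hcu'⟩ ⟨cv, hcv'⟩ :=
    SimpleGraph.ConnectedComponent.exact (hcuC.trans hcvC.symm)
  obtain ⟨wmidC⟩ := hreach
  obtain ⟨wmid, hwmid⟩ := walk_avoiding ⟨hconn, hacyc, hvert, hedge, hsub⟩ i wmidC mu mv hcumu hcvmv
  have : ju = jv := branch_unique hacyc hju hjv qu hqu qv hqv wmid hwmid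
  exact ⟨ju, hju, hubagju, this ▸ hvbagjv⟩

/-- Under the clique-separator hypothesis, `realized G (bag i)` is just the induced subgraph. -/
lemma realized_eq_induce (htd : IsTreeDecomp G T bag)
    (hcl : ∀ i j, T.Adj i j → G.IsClique (bag i ∩ bag j)) (i : ι) :
    realized G (bag i) = G.induce (bag i) := by
  ext a b
  constructor
  · rintro ⟨hne, h | ⟨C, hu, hv⟩⟩
    · exact h
    · obtain ⟨j, hij, huj, hvj⟩ := nbhd_pair_in_separator htd i hu hv
      have := hcl i j hij (x := (a : V)) ⟨a.2, huj⟩ (y := (b : V)) ⟨b.2, hvj⟩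
        (fun h => hne (Subtype.ext h))
      exact this
  · intro h
    have hG : G.Adj ↑a ↑b := h
    exact ⟨fun hab => hG.ne (congrArg Subtype.val hab), Or.inl hG⟩
end LemmaA2
section Glue
variable {ι : Type} {κ : ι → Type}

/-- Gluing tree-decompositions of the parts along the tree `T`. -/
def glueG (T : SimpleGraph ι) (S : ∀ i, SimpleGraph (κ i)) (cnode : ∀ i j : ι, κ i) :
    SimpleGraph (Σ i, κ i) where
  Adj x y := (∃ h : y.1 = x.1, (S x.1).Adj x.2 (h ▸ y.2)) ∨
    (T.Adj x.1 y.1 ∧ x.2 = cnode x.1 y.1 ∧ y.2 = cnode y.1 x.1)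
  symm := by
    constructor
    rintro ⟨x1, x2⟩ ⟨y1, y2⟩ (⟨h, hadj⟩ | ⟨ht, h1, h2⟩)
    · dsimp at h
      subst h
      exact Or.inl ⟨rfl, hadj.symm⟩
    · exact Or.inr ⟨ht.symm, h2, h1⟩
  loopless := by
    constructor
    rintro ⟨x1, x2⟩ (⟨h, hadj⟩ | ⟨ht, -, -⟩)
    · exact (S x1).loopless.irrefl x2 hadj
    · exact T.loopless.irrefl x1 ht

variable (T : SimpleGraph ι) (S : ∀ i, SimpleGraph (κ i)) (cnode : ∀ i j : ι, κ i)

/-- The embedding of the `i`-th part into the glued graph. -/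
def glueUp (i : ι) : S i →g glueG T S cnode where
  toFun s := ⟨i, s⟩
  map_rel' h := Or.inl ⟨rfl, h⟩

lemma glueUp_injective (i : ι) : Function.Injective (glueUp T S cnode i) := by
  intro a b h
  have h' : (⟨i, a⟩ : Σ i, κ i) = ⟨i, b⟩ := h
  exact eq_of_heq (Sigma.mk.inj_iff.mp h').2

lemma glue_reach_same {i : ι} {s t : κ i} (h : (S i).Reachable s t) :
    (glueG T S cnode).Reachable ⟨i, s⟩ ⟨i, t⟩ :=
  h.map (glueUp T S cnode i)

lemma glue_connected (hT : T.Connected) (hS : ∀ i, (S i).Connected) :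
    (glueG T S cnode).Connected := by
  haveI : Nonempty ι := hT.nonempty
  haveI : ∀ i, Nonempty (κ i) := fun i => (hS i).nonempty
  haveI : Nonempty (Σ i, κ i) := ⟨⟨Classical.arbitrary ι, Classical.arbitrary _⟩⟩
  have aux : ∀ (a b : ι) (w : T.Walk a b) (s : κ a) (t : κ b),
      (glueG T S cnode).Reachable ⟨a, s⟩ ⟨b, t⟩ := by
    intro a b w
    induction w with
    | nil => exact fun s t => glue_reach_same T S cnode ((hS _).preconnected s t)
    | @cons a a' b h w ih =>
      intro s t
      refine Reachable.trans (glue_reach_same T S cnode ((hS _).preconnected s (cnode a a'))) ?_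
      exact Reachable.trans (SimpleGraph.Adj.reachable (Or.inr ⟨h, rfl, rfl⟩)) (ih (cnode a' a) t)
  constructor
  rintro ⟨a, s⟩ ⟨b, t⟩
  obtain ⟨w⟩ := hT a b
  exact aux a b w s t

lemma glue_cross_bridge (hT : T.IsAcyclic) {i j : ι} (hadj : T.Adj i j) :
    (glueG T S cnode).IsBridge s(⟨i, cnode i j⟩, ⟨j, cnode j i⟩) := by
  rw [SimpleGraph.isBridge_iff]
  intro hreach
  have hTbridge := (SimpleGraph.isAcyclic_iff_forall_adj_isBridge.mp hT) hadj
  rw [SimpleGraph.isBridge_iff] at hTbridge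
  refine hTbridge ?_
  obtain ⟨p⟩ := hreach
  have proj : ∀ {x y : Σ i, κ i}
      (p : ((glueG T S cnode) \ SimpleGraph.fromEdgeSet
        {s((⟨i, cnode i j⟩ : Σ i, κ i), ⟨j, cnode j i⟩)}).Walk x y),
      (T \ SimpleGraph.fromEdgeSet {s(i, j)}).Reachable x.1 y.1 := by
    intro x y p
    induction p with
    | nil => exact SimpleGraph.Reachable.refl _
    | @cons x z y h q ih =>
      refine SimpleGraph.Reachable.trans ?_ ih
      rw [SimpleGraph.sdiff_adj] at h
      obtain ⟨hGL, hnot⟩ := h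
      rcases hGL with ⟨hcomp, -⟩ | ⟨ht, h1, h2⟩
      · rw [hcomp]
      · refine SimpleGraph.Adj.reachable ?_
        rw [SimpleGraph.sdiff_adj]
        refine ⟨ht, ?_⟩
        rw [SimpleGraph.fromEdgeSet_adj]
        rintro ⟨hmem, -⟩
        rw [Set.mem_singleton_iff] at hmem
        apply hnot
        rw [SimpleGraph.fromEdgeSet_adj]
        refine ⟨?_, fun hxz => ht.ne (congrArg Sigma.fst hxz)⟩
        rw [Set.mem_singleton_iff]
        obtain ⟨x1, x2⟩ := x
        obtain ⟨z1, z2⟩ := z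
        dsimp at ht h1 h2 hmem
        rcases Sym2.eq_iff.mp hmem with ⟨hxi, hzj⟩ | ⟨hxj, hzi⟩
        · subst hxi; subst hzj
          subst h1; subst h2
          rfl
        · subst hxj; subst hzi
          subst h1; subst h2
          rw [Sym2.eq_swap]
  exact proj p

lemma glue_pullback (i : ι) : ∀ (n : ℕ) (x2 y2 : κ i)
    (p : (glueG T S cnode).Walk ⟨i, x2⟩ ⟨i, y2⟩), p.length = n →
    (∀ d ∈ p.darts, d.fst.1 = d.snd.1) →
    ∃ q : (S i).Walk x2 y2, p = q.map (glueUp T S cnode i) := by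
  intro n
  induction n with
  | zero =>
    intro x2 y2 p hlen _
    cases p with
    | nil => exact ⟨SimpleGraph.Walk.nil, rfl⟩
    | cons h q => simp at hlen
  | succ n ihn =>
    intro x2 y2 p hlen hd
    cases p with
    | nil => simp at hlen
    | @cons _ z _ h q =>
      have hz1 : z.1 = i := by
        have := hd ⟨(⟨i, x2⟩, z), h⟩ (by rw [SimpleGraph.Walk.darts_cons]; exact List.mem_cons_self)
        exact this.symm
      obtain ⟨z1, z2⟩ := z
      subst hz1
      have hadj : (S z1).Adj x2 z2 := by
        rcases h with ⟨h', hadj⟩ | ⟨ht, -, -⟩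
        · exact hadj
        · exact absurd rfl ht.ne
      obtain ⟨q', hq'⟩ := ihn z2 y2 q (by simpa using hlen)
        (fun d hd' => hd d (by rw [SimpleGraph.Walk.darts_cons]; exact List.mem_cons_of_mem _ hd'))
      refine ⟨SimpleGraph.Walk.cons hadj q', ?_⟩
      rw [SimpleGraph.Walk.map_cons, ← hq']
      rfl

lemma glue_acyclic (hT : T.IsAcyclic) (hS : ∀ i, (S i).IsAcyclic) :
    (glueG T S cnode).IsAcyclic := by
  rintro ⟨x1, x2⟩ c hc
  by_cases hall : ∀ d ∈ c.darts, d.fst.1 = d.snd.1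
  · obtain ⟨q, hq⟩ := glue_pullback T S cnode x1 c.length x2 x2 c rfl hall
    rw [hq] at hc
    exact hS x1 q ((SimpleGraph.Walk.map_isCycle_iff_of_injective
      (glueUp_injective T S cnode x1)).mp hc)
  · push_neg at hall
    obtain ⟨d, hd, hne⟩ := hall
    have hadj := d.adj
    rcases hadj with ⟨h', -⟩ | ⟨ht, h1, h2⟩
    · exact hne h'.symm
    · have hbridge := glue_cross_bridge T S cnode hT ht
      rw [SimpleGraph.isBridge_iff_adj_and_forall_cycle_notMem
        (Iff.mpr (SimpleGraph.mem_edgeSet _) (Or.inr ⟨ht, rfl, rfl⟩ : (glueG T S cnode).Adj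
          ⟨d.fst.1, cnode d.fst.1 d.snd.1⟩ ⟨d.snd.1, cnode d.snd.1 d.fst.1⟩))] at hbridge
      refine hbridge c hc ?_
      have hdfst : d.fst = ⟨d.fst.1, cnode d.fst.1 d.snd.1⟩ := Sigma.ext rfl (heq_of_eq h1)
      have hdsnd : d.snd = ⟨d.snd.1, cnode d.snd.1 d.fst.1⟩ := Sigma.ext rfl (heq_of_eq h2)
      have hedge : d.edge ∈ c.edges := List.mem_map_of_mem (f := SimpleGraph.Dart.edge) hd
      have : d.edge = s((⟨d.fst.1, cnode d.fst.1 d.snd.1⟩ : Σ i, κ i), ⟨d.snd.1, cnode d.snd.1 d.fst.1⟩) := by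
        rw [← hdfst, ← hdsnd]
        rfl
      rw [this] at hedge
      exact hedge
end Glue
section GlueLe
variable {V ι : Type} [Finite V] [Finite ι]

lemma glue_le (G : SimpleGraph V) (T : SimpleGraph ι) (bag : ι → Set V)
    (htd : IsTreeDecomp G T bag)
    (hcl : ∀ i j, T.Adj i j → G.IsClique (bag i ∩ bag j)) (M : ℕ)
    (hM : ∀ i, tw (G.induce (bag i)) ≤ M) : tw G ≤ M := by
  classical
  obtain ⟨hconn, hacyc, hvert, hedge, hsub⟩ := htd
  choose κ S bg hdec hwidth using fun i => exists_optimal_decomp (G.induce (bag i))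
  have hSconn : ∀ i, (S i).Connected := fun i => (hdec i).1
  have hSacyc : ∀ i, (S i).IsAcyclic := fun i => (hdec i).2.1
  have hKclique : ∀ i j, T.Adj i j →
      (G.induce (bag i)).IsClique {v : ↥(bag i) | (v : V) ∈ bag j} := by
    intro i j hij x hx y hy hxy
    exact hcl i j hij ⟨x.2, hx⟩ ⟨y.2, hy⟩ (fun h => hxy (Subtype.ext h))
  have hcex : ∀ i j, ∃ t : κ i, T.Adj i j → ∀ v : ↥(bag i), (v : V) ∈ bag j → v ∈ bg i t := by
    intro i j
    by_cases hij : T.Adj i j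
    · obtain ⟨t, ht⟩ := clique_in_bag (G.induce (bag i)) (hdec i) (hKclique i j hij)
      exact ⟨t, fun _ v hv => ht hv⟩
    · haveI : Nonempty (κ i) := (hSconn i).nonempty
      exact ⟨Classical.arbitrary _, fun h => absurd h hij⟩
  choose cnode hcnode using hcex
  refine tw_le G (T := glueG T S cnode) (bag := fun x => Subtype.val '' bg x.1 x.2)
    ⟨?_, ?_, ?_, ?_, ?_⟩ ?_
  · exact glue_connected T S cnode hconn hSconn
  · exact glue_acyclic T S cnode hacyc hSacyc
  · intro v
    obtain ⟨i, hvi⟩ := hvert v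
    obtain ⟨s, hs⟩ := (hdec i).2.2.1 ⟨v, hvi⟩
    exact ⟨⟨i, s⟩, ⟨⟨v, hvi⟩, hs, rfl⟩⟩
  · intro u v huv
    obtain ⟨i, hui, hvi⟩ := hedge u v huv
    have : (G.induce (bag i)).Adj ⟨u, hui⟩ ⟨v, hvi⟩ := huv
    obtain ⟨s, hus, hvs⟩ := (hdec i).2.2.2.1 _ _ this
    exact ⟨⟨i, s⟩, ⟨⟨u, hui⟩, hus, rfl⟩, ⟨⟨v, hvi⟩, hvs, rfl⟩⟩
  · intro v
    set Sv : Set (Σ i, κ i) := {x | v ∈ Subtype.val '' bg x.1 x.2} with hSv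
    -- same-copy reachability
    have R1 : ∀ (i : ι) (hvi : v ∈ bag i) (s t : κ i)
        (hs : (⟨v, hvi⟩ : ↥(bag i)) ∈ bg i s) (ht : (⟨v, hvi⟩ : ↥(bag i)) ∈ bg i t),
        ((glueG T S cnode).induce Sv).Reachable
          ⟨⟨i, s⟩, ⟨⟨v, hvi⟩, hs, rfl⟩⟩ ⟨⟨i, t⟩, ⟨⟨v, hvi⟩, ht, rfl⟩⟩ := by
      intro i hvi s t hs ht
      have hSvi := (hdec i).2.2.2.2 ⟨v, hvi⟩
      obtain ⟨w⟩ := hSvi ⟨s, hs⟩ ⟨t, ht⟩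
      let f : ((S i).induce {z | (⟨v, hvi⟩ : ↥(bag i)) ∈ bg i z}) →g
          ((glueG T S cnode).induce Sv) :=
        ⟨fun z => ⟨⟨i, z.1⟩, ⟨⟨v, hvi⟩, z.2, rfl⟩⟩, fun {a b} hab => Or.inl ⟨rfl, hab⟩⟩
      exact ⟨w.map f⟩
    have aux : ∀ (a b : ↥{m | v ∈ bag m}) (w : (T.induce {m | v ∈ bag m}).Walk a b)
        (s : κ a.1) (t : κ b.1) (hs : (⟨v, a.2⟩ : ↥(bag a.1)) ∈ bg a.1 s)
        (ht : (⟨v, b.2⟩ : ↥(bag b.1)) ∈ bg b.1 t),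
        ((glueG T S cnode).induce Sv).Reachable
          ⟨⟨a.1, s⟩, ⟨⟨v, a.2⟩, hs, rfl⟩⟩ ⟨⟨b.1, t⟩, ⟨⟨v, b.2⟩, ht, rfl⟩⟩ := by
      intro a b w
      induction w with
      | nil => exact fun s t hs ht => R1 _ _ s t hs ht
      | @cons a a' b hadj w ih =>
        intro s t hs ht
        have hTadj : T.Adj a.1 a'.1 := hadj
        have hmem1 : (⟨v, a.2⟩ : ↥(bag a.1)) ∈ bg a.1 (cnode a.1 a'.1) :=
          hcnode a.1 a'.1 hTadj ⟨v, a.2⟩ a'.2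
        have hmem2 : (⟨v, a'.2⟩ : ↥(bag a'.1)) ∈ bg a'.1 (cnode a'.1 a.1) :=
          hcnode a'.1 a.1 hTadj.symm ⟨v, a'.2⟩ a.2
        refine Reachable.trans (R1 _ _ s (cnode a.1 a'.1) hs hmem1) ?_
        refine Reachable.trans (SimpleGraph.Adj.reachable
          (by exact Or.inr ⟨hTadj, rfl, rfl⟩ :
            ((glueG T S cnode).induce Sv).Adj
              ⟨⟨a.1, cnode a.1 a'.1⟩, ⟨⟨v, a.2⟩, hmem1, rfl⟩⟩
              ⟨⟨a'.1, cnode a'.1 a.1⟩, ⟨⟨v, a'.2⟩, hmem2, rfl⟩⟩)) ?_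
        exact ih (cnode a'.1 a.1) t hmem2 ht
    have hne : Nonempty ↥Sv := by
      obtain ⟨i, hvi⟩ := hvert v
      obtain ⟨s, hs⟩ := (hdec i).2.2.1 ⟨v, hvi⟩
      exact ⟨⟨⟨i, s⟩, ⟨⟨v, hvi⟩, hs, rfl⟩⟩⟩
    refine ⟨fun x y => ?_⟩
    obtain ⟨⟨i, s⟩, hx⟩ := x
    obtain ⟨⟨j, t⟩, hy⟩ := y
    obtain ⟨wu, hwu, hwuv⟩ := hx
    obtain ⟨wv, hwv, hwvv⟩ := hy
    have hvi : v ∈ bag i := hwuv ▸ wu.2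
    have hvj : v ∈ bag j := hwvv ▸ wv.2
    have hs' : (⟨v, hvi⟩ : ↥(bag i)) ∈ bg i s := by
      have : (⟨v, hvi⟩ : ↥(bag i)) = wu := Subtype.ext hwuv.symm
      rw [this]; exact hwu
    have ht' : (⟨v, hvj⟩ : ↥(bag j)) ∈ bg j t := by
      have : (⟨v, hvj⟩ : ↥(bag j)) = wv := Subtype.ext hwvv.symm
      rw [this]; exact hwv
    obtain ⟨w⟩ := (hsub v).preconnected ⟨i, hvi⟩ ⟨j, hvj⟩
    exact aux ⟨i, hvi⟩ ⟨j, hvj⟩ w s t hs' ht'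
  · intro x
    rw [Set.ncard_image_of_injective _ Subtype.val_injective]
    calc (bg x.1 x.2).ncard ≤ tw (G.induce (bag x.1)) + 1 := hwidth x.1 x.2
      _ ≤ M + 1 := by have := hM x.1; omega
end GlueLe

/-- if every induced separator of a tree-decomposition of `G` is a
clique of `G`, then `tw G` equals the maximum over nodes `i` of `tw G_i`, where
`G_i` is `G[A_i]` with `N(C)` completed into a clique for every component `C` of
`G \ A_i`. -/
theorem stmt18 {V ι : Type} [Finite V] [Finite ι] (G : SimpleGraph V)
    (T : SimpleGraph ι) (bag : ι → Set V) (htd : IsTreeDecomp G T bag)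
    (hcl : ∀ i j, T.Adj i j → G.IsClique (bag i ∩ bag j)) :
    IsGreatest {k | ∃ i, k = tw (realized G (bag i))} (tw G) := by
  classical
  haveI : Nonempty ι := htd.1.nonempty
  have heq : ∀ i, tw (realized G (bag i)) = tw (G.induce (bag i)) := fun i => by
    rw [realized_eq_induce htd hcl i]
  have hub : ∀ i, tw (realized G (bag i)) ≤ tw G := fun i =>
    (heq i) ▸ tw_induce_le G (bag i)
  obtain ⟨i₀, hi₀⟩ := Finite.exists_max (fun i => tw (realized G (bag i)))
  constructor
  · refine ⟨i₀, ?_⟩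
    have h1 : tw G ≤ tw (realized G (bag i₀)) := by
      rw [heq i₀]
      refine glue_le G T bag htd hcl _ (fun i => ?_)
      rw [← heq i₀, ← heq i]
      exact hi₀ i
    exact le_antisymm h1 (hub i₀)
  · rintro k ⟨i, rfl⟩
    exact hub i
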